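/- Assume Σ > 0 and set λ* = 1/2 + Δ/(2Σ). Then λ* is the unique root of μ in [0,1] (so λ* is the purest stabilizable state), and the diagonal density matrix ρ = diag(λ*, 1 − λ*) is a fixed point of the dissipative dynamics: ∑_{k=1}^3 (V_k ρ V_k* − (1/2)(V_k* V_k ρ + ρ V_k* V_k)) = 0. -/

import Mathlib

open Matrix Complex

/-- `Jf V U i j = ∑ₖ |(U* Vₖ U)ᵢⱼ|²`. -/
noncomputable def Jf {r : ℕ} (V : Fin r → Matrix (Fin 2) (Fin 2) ℂ)
    (U : Matrix (Fin 2) (Fin 2) ℂ) (i j : Fin 2) : ℝ :=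
  ∑ k, ‖(Uᴴ * V k * U) i j‖ ^ 2

/-- The space of generators `Q`. -/
noncomputable def Qset {r : ℕ} (V : Fin r → Matrix (Fin 2) (Fin 2) ℂ) : Set (ℝ × ℝ) :=
  {p | ∃ U ∈ Matrix.specialUnitaryGroup (Fin 2) ℂ,
    p = (Jf V U 0 1 - Jf V U 1 0, Jf V U 0 1 + Jf V U 1 0)}

/-- `lam` is stabilizable if some unitary makes the induced derivative vanish. -/
def Stabilizable {r : ℕ} (V : Fin r → Matrix (Fin 2) (Fin 2) ℂ) (lam : ℝ) : Prop :=
  ∃ U ∈ Matrix.specialUnitaryGroup (Fin 2) ℂ,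
    Jf V U 0 1 - lam * (Jf V U 0 1 + Jf V U 1 0) = 0

set_option linter.unnecessarySeqFocus false in
lemma key_jf (γp γm γz : ℝ) (hp : 0 ≤ γp) (hm : 0 ≤ γm) (hz : 0 ≤ γz)
    (V : Fin 3 → Matrix (Fin 2) (Fin 2) ℂ)
    (hV0 : V 0 = (Real.sqrt γp : ℂ) • ((1/2 : ℂ) •
      ((!![0, 1; 1, 0] : Matrix (Fin 2) (Fin 2) ℂ)
        + Complex.I • (!![0, -Complex.I; Complex.I, 0] : Matrix (Fin 2) (Fin 2) ℂ))))
    (hV1 : V 1 = (Real.sqrt γm : ℂ) • ((1/2 : ℂ) •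
      ((!![0, 1; 1, 0] : Matrix (Fin 2) (Fin 2) ℂ)
        - Complex.I • (!![0, -Complex.I; Complex.I, 0] : Matrix (Fin 2) (Fin 2) ℂ))))
    (hV2 : V 2 = (Real.sqrt γz : ℂ) • (!![1, 0; 0, -1] : Matrix (Fin 2) (Fin 2) ℂ))
    (U : Matrix (Fin 2) (Fin 2) ℂ) (hU : U ∈ Matrix.unitaryGroup (Fin 2) ℂ) :
    0 ≤ Complex.normSq (U 0 0) ∧ Complex.normSq (U 0 0) ≤ 1 ∧
      Jf V U 0 1 = γp * (Complex.normSq (U 0 0))^2 + γm * (1-Complex.normSq (U 0 0))^2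
        + 4*γz*((Complex.normSq (U 0 0))*(1-Complex.normSq (U 0 0))) ∧
      Jf V U 1 0 = γp * (1-Complex.normSq (U 0 0))^2 + γm * (Complex.normSq (U 0 0))^2
        + 4*γz*((Complex.normSq (U 0 0))*(1-Complex.normSq (U 0 0))) := by
  have hW0 : V 0 = (Real.sqrt γp : ℂ) • !![0, 1; 0, 0] := by
    rw [hV0]; congr 1; ext i j; fin_cases i <;> fin_cases j <;>
      (simp [Matrix.add_apply, Matrix.smul_apply]; try ring)
  have hW1 : V 1 = (Real.sqrt γm : ℂ) • !![0, 0; 1, 0] := by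
    rw [hV1]; congr 1; ext i j; fin_cases i <;> fin_cases j <;>
      (simp [Matrix.sub_apply, Matrix.smul_apply]; try ring)
  have h1 : Uᴴ * U = 1 := Matrix.mem_unitaryGroup_iff'.mp hU
  have h2 : U * Uᴴ = 1 := Matrix.mem_unitaryGroup_iff.mp hU
  have e1 := congrFun (congrFun h1 0) 0
  have e2 := congrFun (congrFun h1 1) 1
  have e3 := congrFun (congrFun h1 0) 1
  have e4 := congrFun (congrFun h2 0) 0
  simp [Matrix.mul_apply, Fin.sum_univ_two, Matrix.one_apply, Matrix.conjTranspose_apply] at e1 e2 e3 e4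
  set t := Complex.normSq (U 0 0) with ht
  have n1 : Complex.normSq (U 0 0) + Complex.normSq (U 1 0) = 1 := by
    have : ((Complex.normSq (U 0 0) : ℂ)) + (Complex.normSq (U 1 0) : ℂ) = 1 := by
      rw [Complex.normSq_eq_conj_mul_self, Complex.normSq_eq_conj_mul_self]; exact e1
    exact_mod_cast this
  have n4 : Complex.normSq (U 0 0) + Complex.normSq (U 0 1) = 1 := by
    have : ((Complex.normSq (U 0 0) : ℂ)) + (Complex.normSq (U 0 1) : ℂ) = 1 := by
      rw [← Complex.mul_conj, ← Complex.mul_conj]; exact e4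
    exact_mod_cast this
  have n2 : Complex.normSq (U 1 1) = t := by
    have h : ((Complex.normSq (U 0 1) : ℂ)) + (Complex.normSq (U 1 1) : ℂ) = 1 := by
      rw [Complex.normSq_eq_conj_mul_self, Complex.normSq_eq_conj_mul_self]; exact e2
    have h' : Complex.normSq (U 0 1) + Complex.normSq (U 1 1) = 1 := by exact_mod_cast h
    linarith
  have n10 : Complex.normSq (U 1 0) = 1 - t := by linarith
  have n01 : Complex.normSq (U 0 1) = 1 - t := by linarith
  have ht0 : 0 ≤ t := Complex.normSq_nonneg _
  have ht1 : t ≤ 1 := by nlinarith [Complex.normSq_nonneg (U 1 0)]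
  have hzterm : Complex.normSq ((starRingEnd ℂ) (U 0 0) * U 0 1 - (starRingEnd ℂ) (U 1 0) * U 1 1)
      = 4 * (t * (1 - t)) := by
    have hx : (starRingEnd ℂ) (U 0 0) * U 0 1 - (starRingEnd ℂ) (U 1 0) * U 1 1
        = 2 * ((starRingEnd ℂ) (U 0 0) * U 0 1) := by linear_combination -e3
    rw [hx, Complex.normSq_mul, Complex.normSq_mul, Complex.normSq_conj, n01,
      show Complex.normSq 2 = 4 by norm_num [Complex.normSq], ← ht]
    try ring
  have hzterm' : Complex.normSq ((starRingEnd ℂ) (U 0 1) * U 0 0 - (starRingEnd ℂ) (U 1 1) * U 1 0)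
      = 4 * (t * (1 - t)) := by
    have hx : (starRingEnd ℂ) (U 0 1) * U 0 0 - (starRingEnd ℂ) (U 1 1) * U 1 0
        = (starRingEnd ℂ) ((starRingEnd ℂ) (U 0 0) * U 0 1 - (starRingEnd ℂ) (U 1 0) * U 1 1) := by
      simp only [map_sub, _root_.map_mul, Complex.conj_conj]; ring
    rw [hx, Complex.normSq_conj, hzterm]
  refine ⟨ht0, ht1, ?_, ?_⟩
  · unfold Jf
    rw [Fin.sum_univ_three, hW0, hW1, hV2]
    simp [Matrix.mul_apply, Fin.sum_univ_two, Matrix.conjTranspose_apply, Complex.sq_norm,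
      Complex.normSq_mul, Complex.normSq_conj, Complex.normSq_ofReal]
    simp only [mul_pow, Complex.sq_norm, _root_.sq_abs, Real.sq_sqrt hp, Real.sq_sqrt hm]
    have h3 : (starRingEnd ℂ) (U 0 0) * (↑(Real.sqrt γz) : ℂ) * U 0 1 + -((starRingEnd ℂ) (U 1 0) * (↑(Real.sqrt γz) : ℂ) * U 1 1)
        = (↑(Real.sqrt γz) : ℂ) * ((starRingEnd ℂ) (U 0 0) * U 0 1 - (starRingEnd ℂ) (U 1 0) * U 1 1) := by ring
    rw [h3, Complex.normSq_mul, Complex.normSq_ofReal, Real.mul_self_sqrt hz, hzterm]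
    rw [n2, n10, n01, ← ht]
    ring
  · unfold Jf
    rw [Fin.sum_univ_three, hW0, hW1, hV2]
    simp [Matrix.mul_apply, Fin.sum_univ_two, Matrix.conjTranspose_apply, Complex.sq_norm,
      Complex.normSq_mul, Complex.normSq_conj, Complex.normSq_ofReal]
    simp only [mul_pow, Complex.sq_norm, _root_.sq_abs, Real.sq_sqrt hp, Real.sq_sqrt hm]
    have h3 : (starRingEnd ℂ) (U 0 1) * (↑(Real.sqrt γz) : ℂ) * U 0 0 + -((starRingEnd ℂ) (U 1 1) * (↑(Real.sqrt γz) : ℂ) * U 1 0)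
        = (↑(Real.sqrt γz) : ℂ) * ((starRingEnd ℂ) (U 0 1) * U 0 0 - (starRingEnd ℂ) (U 1 1) * U 1 0) := by ring
    rw [h3, Complex.normSq_mul, Complex.normSq_ofReal, Real.mul_self_sqrt hz, hzterm']
    rw [n2, n10, n01, ← ht]
    ring

set_option maxHeartbeats 1000000 in
theorem stmt_19
    (γp γm γz : ℝ) (hpm : γm ≤ γp) (hm : 0 ≤ γm) (hz : 0 ≤ γz)
    (Δ Sig δ : ℝ) (hΔ : Δ = γp - γm) (hSig : Sig = γp + γm) (hδ : δ = 2 * γz - Sig / 2)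
    (hSigpos : 0 < Sig)
    (V : Fin 3 → Matrix (Fin 2) (Fin 2) ℂ)
    (hV0 : V 0 = (Real.sqrt γp : ℂ) • ((1/2 : ℂ) •
      ((!![0, 1; 1, 0] : Matrix (Fin 2) (Fin 2) ℂ)
        + Complex.I • (!![0, -Complex.I; Complex.I, 0] : Matrix (Fin 2) (Fin 2) ℂ))))
    (hV1 : V 1 = (Real.sqrt γm : ℂ) • ((1/2 : ℂ) •
      ((!![0, 1; 1, 0] : Matrix (Fin 2) (Fin 2) ℂ)
        - Complex.I • (!![0, -Complex.I; Complex.I, 0] : Matrix (Fin 2) (Fin 2) ℂ))))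
    (hV2 : V 2 = (Real.sqrt γz : ℂ) • (!![1, 0; 0, -1] : Matrix (Fin 2) (Fin 2) ℂ))
    (μ : ℝ → ℝ)
    (hμ : ∀ lam ∈ Set.Icc (0:ℝ) 1,
      IsGreatest {y : ℝ | ∃ U ∈ Matrix.specialUnitaryGroup (Fin 2) ℂ,
        y = Jf V U 0 1 - lam * (Jf V U 0 1 + Jf V U 1 0)} (μ lam))
    (lamStar : ℝ) (hls : lamStar = 1/2 + Δ / (2 * Sig))
    (ρ : Matrix (Fin 2) (Fin 2) ℂ)
    (hρ : ρ = Matrix.diagonal ![(lamStar : ℂ), 1 - lamStar]) :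
    lamStar ∈ Set.Icc (0:ℝ) 1 ∧ μ lamStar = 0 ∧
    (∀ l ∈ Set.Icc (0:ℝ) 1, μ l = 0 → l = lamStar) ∧
    ∑ k, (V k * ρ * (V k)ᴴ -
      (1/2 : ℂ) • ((V k)ᴴ * V k * ρ + ρ * ((V k)ᴴ * V k))) = 0 := by
  have hp : 0 ≤ γp := le_trans hm hpm
  have hS0 : Sig ≠ 0 := ne_of_gt hSigpos
  have hls' : lamStar = γp / Sig := by
    rw [hls, hΔ]
    field_simp
    rw [hSig]; ring
  have hmem1 : lamStar ∈ Set.Icc (0:ℝ) 1 := by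
    rw [hls']
    constructor
    · exact div_nonneg hp hSigpos.le
    · rw [div_le_one hSigpos, hSig]; linarith
  -- identity matrix in SU(2)
  have hSU1 : (1 : Matrix (Fin 2) (Fin 2) ℂ) ∈ Matrix.specialUnitaryGroup (Fin 2) ℂ := by
    constructor
    · exact Matrix.mem_unitaryGroup_iff.mpr (by simp)
    · simp
  have hone : Complex.normSq ((1 : Matrix (Fin 2) (Fin 2) ℂ) 0 0) = 1 := by
    simp [Matrix.one_apply]
  obtain ⟨-, -, j12one, j21one⟩ := key_jf γp γm γz hp hm hz V hV0 hV1 hV2 1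
    (Matrix.mem_unitaryGroup_iff.mpr (by simp))
  rw [hone] at j12one j21one
  norm_num at j12one j21one
  -- value of the functional at U = 1 :  Jf = γp, γm
  have hval1 : ∀ l : ℝ, Jf V 1 0 1 - l * (Jf V 1 0 1 + Jf V 1 1 0) = γp - l * Sig := by
    intro l; rw [j12one, j21one, hSig]
  -- the key inequality for arbitrary U in SU(2)
  have hineq : ∀ U ∈ Matrix.specialUnitaryGroup (Fin 2) ℂ,
      Sig * Jf V U 0 1 ≤ γp * (Jf V U 0 1 + Jf V U 1 0) ∧
      Sig / 2 ≤ Jf V U 0 1 + Jf V U 1 0 := by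
    intro U hU
    obtain ⟨ht0, ht1, hJ12, hJ21⟩ := key_jf γp γm γz hp hm hz V hV0 hV1 hV2 U hU.1
    set t := Complex.normSq (U 0 0)
    constructor
    · rw [hJ12, hJ21, hSig]
      nlinarith [mul_nonneg (mul_nonneg (sub_nonneg.2 hpm) (sub_nonneg.2 ht1))
        (add_nonneg (mul_nonneg (by linarith : (0:ℝ) ≤ γp + γm) (by linarith : (0:ℝ) ≤ 1 - t))
          (mul_nonneg (by linarith : (0:ℝ) ≤ 4*γz) ht0))]
    · rw [hJ12, hJ21, hSig]
      nlinarith [sq_nonneg (2*t - 1), mul_nonneg (mul_nonneg hz ht0) (by linarith : (0:ℝ) ≤ 1 - t)]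
  have hG := hμ lamStar hmem1
  have h0mem : (0:ℝ) ∈ {y : ℝ | ∃ U ∈ Matrix.specialUnitaryGroup (Fin 2) ℂ,
      y = Jf V U 0 1 - lamStar * (Jf V U 0 1 + Jf V U 1 0)} := by
    refine ⟨1, hSU1, ?_⟩
    rw [hval1, hls']
    field_simp
    ring
  have hmu0 : μ lamStar = 0 := by
    have hle : 0 ≤ μ lamStar := hG.2 h0mem
    obtain ⟨U, hU, hvalU⟩ := hG.1
    obtain ⟨h1, h2⟩ := hineq U hU
    have : μ lamStar ≤ 0 := by
      rw [hvalU, hls']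
      have hsum0 : 0 < Jf V U 0 1 + Jf V U 1 0 := lt_of_lt_of_le (by linarith) h2
      rw [div_mul_eq_mul_div, sub_nonpos, le_div_iff₀ hSigpos]
      linarith
    linarith
  refine ⟨hmem1, hmu0, ?_, ?_⟩
  · intro l hl hmul
    have hGl := hμ l hl
    have h1 : γp - l * Sig ≤ 0 := by
      have := hGl.2 ⟨1, hSU1, (hval1 l).symm⟩
      rw [hmul] at this; linarith
    obtain ⟨U, hU, hvalU⟩ := hGl.1
    rw [hmul] at hvalU
    obtain ⟨hkey, hsum⟩ := hineq U hU
    have hsum0 : 0 < Jf V U 0 1 + Jf V U 1 0 := lt_of_lt_of_le (by linarith) hsum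
    have h2 : l * Sig ≤ γp := by
      have hJ : Jf V U 0 1 = l * (Jf V U 0 1 + Jf V U 1 0) := by linarith
      nlinarith
    rw [hls', eq_div_iff hS0]
    linarith
  · -- the fixed-point computation
    have hW0 : V 0 = (Real.sqrt γp : ℂ) • !![0, 1; 0, 0] := by
      rw [hV0]; congr 1; ext i j; fin_cases i <;> fin_cases j <;>
        (simp [Matrix.add_apply, Matrix.smul_apply]; try ring)
    have hW1 : V 1 = (Real.sqrt γm : ℂ) • !![0, 0; 1, 0] := by
      rw [hV1]; congr 1; ext i j; fin_cases i <;> fin_cases j <;>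
        (simp [Matrix.sub_apply, Matrix.smul_apply]; try ring)
    have hsp : ((Real.sqrt γp : ℝ) : ℂ) * ((Real.sqrt γp : ℝ) : ℂ) = (γp : ℂ) := by
      rw [← Complex.ofReal_mul, Real.mul_self_sqrt hp]
    have hsm : ((Real.sqrt γm : ℝ) : ℂ) * ((Real.sqrt γm : ℝ) : ℂ) = (γm : ℂ) := by
      rw [← Complex.ofReal_mul, Real.mul_self_sqrt hm]
    have hsz : ((Real.sqrt γz : ℝ) : ℂ) * ((Real.sqrt γz : ℝ) : ℂ) = (γz : ℂ) := by
      rw [← Complex.ofReal_mul, Real.mul_self_sqrt hz]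
    have hkeyC : (γp : ℂ) * (1 - (lamStar : ℂ)) - (γm : ℂ) * (lamStar : ℂ) = 0 := by
      have hr : γp * (1 - lamStar) - γm * lamStar = 0 := by
        rw [hls']; field_simp; rw [hSig]; ring
      exact_mod_cast hr
    have hρ' : ρ = !![(lamStar : ℂ), 0; 0, 1 - lamStar] := by
      rw [hρ]; ext i j; fin_cases i <;> fin_cases j <;> simp [Matrix.diagonal_apply]
    have A0 : V 0 * ρ * (V 0)ᴴ = ((γp : ℂ) * (1 - lamStar)) • !![1,0;0,0] := by
      rw [hW0, hρ']; ext i j; fin_cases i <;> fin_cases j <;>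
        (simp [Matrix.mul_apply, Fin.sum_univ_two, Matrix.conjTranspose_apply,
          Matrix.smul_apply]; try linear_combination (1 - (lamStar:ℂ)) * hsp)
    have B0 : (V 0)ᴴ * V 0 = (γp : ℂ) • !![0,0;0,1] := by
      rw [hW0]; ext i j; fin_cases i <;> fin_cases j <;>
        (simp [Matrix.mul_apply, Fin.sum_univ_two, Matrix.conjTranspose_apply,
          Matrix.smul_apply]; try linear_combination hsp)
    have A1 : V 1 * ρ * (V 1)ᴴ = ((γm : ℂ) * lamStar) • !![0,0;0,1] := by
      rw [hW1, hρ']; ext i j; fin_cases i <;> fin_cases j <;>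
        (simp [Matrix.mul_apply, Fin.sum_univ_two, Matrix.conjTranspose_apply,
          Matrix.smul_apply]; try linear_combination (lamStar:ℂ) * hsm)
    have B1 : (V 1)ᴴ * V 1 = (γm : ℂ) • !![1,0;0,0] := by
      rw [hW1]; ext i j; fin_cases i <;> fin_cases j <;>
        (simp [Matrix.mul_apply, Fin.sum_univ_two, Matrix.conjTranspose_apply,
          Matrix.smul_apply]; try linear_combination hsm)
    have A2 : V 2 * ρ * (V 2)ᴴ = (γz : ℂ) • ρ := by
      rw [hV2, hρ']; ext i j; fin_cases i <;> fin_cases j <;>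
        (simp [Matrix.mul_apply, Fin.sum_univ_two, Matrix.conjTranspose_apply,
          Matrix.smul_apply]; all_goals first | linear_combination (lamStar:ℂ) * hsz | linear_combination (1-(lamStar:ℂ)) * hsz)
    have B2 : (V 2)ᴴ * V 2 = (γz : ℂ) • (1 : Matrix (Fin 2) (Fin 2) ℂ) := by
      rw [hV2]; ext i j; fin_cases i <;> fin_cases j <;>
        (simp [Matrix.mul_apply, Fin.sum_univ_two, Matrix.conjTranspose_apply,
          Matrix.smul_apply, Matrix.one_apply]; try linear_combination hsz)
    rw [Fin.sum_univ_three, A0, B0, A1, B1, A2, B2]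
    ext i j
    fin_cases i <;> fin_cases j <;>
      (simp [Matrix.mul_apply, Fin.sum_univ_two, Matrix.smul_apply, Matrix.add_apply,
        Matrix.sub_apply, Matrix.one_apply, hρ']; all_goals first | linear_combination hkeyC | linear_combination -hkeyC)
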